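/- arXiv:1702.03449 — 4 statements merged into one kernel-verified Lean document; each statement's English description precedes it below -/
import Mathlib

section
/- Let 0 < δ < γ, L > 0, and z ∈ ℝ. Then x̂ = sgn(z)·min{(γ/(γ−δ))·|z|, L} is a minimizer of the function x ↦ γ(z − x)² − δ x² over the interval [−L, L], and if z ≠ 0 it is the unique minimizer. Here sgn(z) = +1 if z ≥ 0 and sgn(z) = −1 if z < 0. -/
/-- x̂ = sgn(z)·min{(γ/(γ−δ))·|z|, L} minimizes
x ↦ γ(z − x)² − δ x² over [−L, L], uniquely when z ≠ 0. -/
theorem stmt_5 (γ δ L z : ℝ) (hδ : 0 < δ) (hδγ : δ < γ) (hL : 0 < L) :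
    let sgn : ℝ → ℝ := fun a => if 0 ≤ a then 1 else -1
    let xhat : ℝ := sgn z * min (γ / (γ - δ) * |z|) L
    xhat ∈ Set.Icc (-L) L ∧
      (∀ x ∈ Set.Icc (-L) L,
        γ * (z - xhat) ^ 2 - δ * xhat ^ 2 ≤ γ * (z - x) ^ 2 - δ * x ^ 2) ∧
      (z ≠ 0 → ∀ x ∈ Set.Icc (-L) L, x ≠ xhat →
        γ * (z - xhat) ^ 2 - δ * xhat ^ 2 < γ * (z - x) ^ 2 - δ * x ^ 2) := by
  intro sgn xhat
  have hgd : 0 < γ - δ := by linarith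
  set m : ℝ := γ * z / (γ - δ) with hm
  have hxhat : xhat = min L (max (-L) m) := by
    rcases le_or_gt 0 z with hz | hz
    · have habs : |z| = z := abs_of_nonneg hz
      have hmz : γ / (γ - δ) * |z| = m := by rw [habs, hm]; ring
      have hm0 : 0 ≤ m := by
        apply div_nonneg (mul_nonneg (by linarith) hz) (le_of_lt hgd)
      simp only [xhat, sgn, if_pos hz, one_mul, hmz]
      rw [max_eq_right (by linarith), min_comm]
    · have habs : |z| = -z := abs_of_neg hz
      have hmz : γ / (γ - δ) * |z| = -m := by rw [habs, hm]; ring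
      have hm0 : m < 0 := by
        apply div_neg_of_neg_of_pos (by nlinarith) hgd
      simp only [xhat, sgn, if_neg (not_le.mpr hz), hmz]
      rw [min_eq_right (max_le (by linarith) (by linarith) : max (-L) m ≤ L)]
      rcases le_total (-L) m with h | h
      · rw [max_eq_right h, min_eq_left (by linarith)]; ring
      · rw [max_eq_left h, min_eq_right (by linarith)]; ring
  have hmem : xhat ∈ Set.Icc (-L) L := by
    rw [hxhat]
    constructor
    · exact le_min (by linarith) (le_max_left _ _)
    · exact min_le_left _ _
  have key : ∀ x : ℝ, γ * (z - x) ^ 2 - δ * x ^ 2 - (γ * (z - xhat) ^ 2 - δ * xhat ^ 2)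
      = (γ - δ) * ((x - m) ^ 2 - (xhat - m) ^ 2) := by
    intro x
    have : m * (γ - δ) = γ * z := by
      rw [hm]; field_simp [hgd.ne']
    linear_combination (2*x - 2*xhat) * this
  have hsq : ∀ x ∈ Set.Icc (-L) L, (xhat - m) ^ 2 ≤ (x - m) ^ 2 := by
    intro x hx
    obtain ⟨hx1, hx2⟩ := hx
    rcases le_or_gt m (-L) with h | h
    · have : xhat = -L := by
        rw [hxhat, max_eq_left h, min_eq_right (by linarith)]
      rw [this]; nlinarith
    · rcases le_or_gt L m with h' | h'
      · have : xhat = L := by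
          rw [hxhat, min_eq_left (le_max_of_le_right h')]
        rw [this]; nlinarith
      · have : xhat = m := by
          rw [hxhat, max_eq_right (le_of_lt h), min_eq_right (le_of_lt h')]
        rw [this]; nlinarith [sq_nonneg (x - m)]
  have hsq' : ∀ x ∈ Set.Icc (-L) L, x ≠ xhat → (xhat - m) ^ 2 < (x - m) ^ 2 := by
    intro x hx hne
    obtain ⟨hx1, hx2⟩ := hx
    rcases le_or_gt m (-L) with h | h
    · have hh : xhat = -L := by
        rw [hxhat, max_eq_left h, min_eq_right (by linarith)]
      have : -L < x := lt_of_le_of_ne hx1 (fun e => hne (by rw [hh, ← e]))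
      rw [hh]; nlinarith
    · rcases le_or_gt L m with h' | h'
      · have hh : xhat = L := by
          rw [hxhat, min_eq_left (le_max_of_le_right h')]
        have : x < L := lt_of_le_of_ne hx2 (fun e => hne (by rw [hh, e]))
        rw [hh]; nlinarith
      · have hh : xhat = m := by
          rw [hxhat, max_eq_right (le_of_lt h), min_eq_right (le_of_lt h')]
        have : x - m ≠ 0 := by rw [← hh]; exact sub_ne_zero.mpr hne
        rw [hh]
        have h0 : 0 < (x - m) ^ 2 := by positivity
        nlinarith
  refine ⟨hmem, ?_, ?_⟩
  · intro x hx
    have := hsq x hx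
    nlinarith [key x]
  · intro _ x hx hne
    have := hsq' x hx hne
    nlinarith [key x]
end

section
/- Let τ > 0 and δ > 0 with τδ < 1, let L > 0, and let z ∈ ℝ. Then x̂ = sgn(z)·min{|z|/(1 − τδ), L} is a minimizer of the function x ↦ −(τδ/2) x² + (1/2)(x − z)² over the interval [−L, L], and if z ≠ 0 it is the unique minimizer. Here sgn(z) = +1 if z ≥ 0 and sgn(z) = −1 if z < 0. -/
/-- x̂ = sgn(z)·min{|z|/(1 − τδ), L} minimizes
x ↦ −(τδ/2) x² + (1/2)(x − z)² over [−L, L], uniquely when z ≠ 0. -/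
theorem stmt_6 (τ δ L z : ℝ) (hτ : 0 < τ) (hδ : 0 < δ) (hτδ : τ * δ < 1) (hL : 0 < L) :
    let sgn : ℝ → ℝ := fun a => if 0 ≤ a then 1 else -1
    let xhat : ℝ := sgn z * min (|z| / (1 - τ * δ)) L
    xhat ∈ Set.Icc (-L) L ∧
      (∀ x ∈ Set.Icc (-L) L,
        -(τ * δ / 2) * xhat ^ 2 + (1 / 2) * (xhat - z) ^ 2
          ≤ -(τ * δ / 2) * x ^ 2 + (1 / 2) * (x - z) ^ 2) ∧
      (z ≠ 0 → ∀ x ∈ Set.Icc (-L) L, x ≠ xhat →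
        -(τ * δ / 2) * xhat ^ 2 + (1 / 2) * (xhat - z) ^ 2
          < -(τ * δ / 2) * x ^ 2 + (1 / 2) * (x - z) ^ 2) := by
  intro sgn xhat
  have hc : 0 < 1 - τ * δ := by linarith
  have hxdef : xhat = (if 0 ≤ z then (1:ℝ) else -1) * min (|z| / (1 - τ * δ)) L := rfl
  have hmin0 : 0 ≤ min (|z| / (1 - τ * δ)) L :=
    le_min (div_nonneg (abs_nonneg z) hc.le) hL.le
  have hminL : min (|z| / (1 - τ * δ)) L ≤ L := min_le_right _ _
  have hmem : xhat ∈ Set.Icc (-L) L := by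
    rw [hxdef]; split_ifs <;> constructor <;> nlinarith
  have hcross : ∀ x ∈ Set.Icc (-L) L, 0 ≤ (x - xhat) * ((1 - τ * δ) * xhat - z) := by
    intro x hx
    obtain ⟨hx1, hx2⟩ := hx
    by_cases hz : 0 ≤ z
    · by_cases hm : |z| / (1 - τ * δ) ≤ L
      · have hxe : xhat = z / (1 - τ * δ) := by
          rw [hxdef, if_pos hz, min_eq_left hm, abs_of_nonneg hz, one_mul]
        have : (1 - τ * δ) * xhat - z = 0 := by
          rw [hxe]; field_simp; ring
        rw [this, mul_zero]
      · push_neg at hm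
        have hxe : xhat = L := by
          rw [hxdef, if_pos hz, min_eq_right hm.le, one_mul]
        rw [abs_of_nonneg hz, lt_div_iff₀ hc] at hm
        rw [hxe]
        nlinarith [mul_nonneg (by nlinarith : (0:ℝ) ≤ L - x) (by nlinarith : (0:ℝ) ≤ z - (1 - τ * δ) * L)]
    · push_neg at hz
      by_cases hm : |z| / (1 - τ * δ) ≤ L
      · have hxe : xhat = z / (1 - τ * δ) := by
          rw [hxdef, if_neg (not_le.mpr hz), min_eq_left hm, abs_of_neg hz]
          field_simp
        have : (1 - τ * δ) * xhat - z = 0 := by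
          rw [hxe]; field_simp; ring
        rw [this, mul_zero]
      · push_neg at hm
        have hxe : xhat = -L := by
          rw [hxdef, if_neg (not_le.mpr hz), min_eq_right hm.le]; ring
        rw [abs_of_neg hz, lt_div_iff₀ hc] at hm
        rw [hxe]
        apply mul_nonneg <;> nlinarith
  refine ⟨hmem, ?_, ?_⟩
  · intro x hx
    nlinarith [hcross x hx, mul_nonneg hc.le (sq_nonneg (x - xhat))]
  · intro _ x hx hne
    have h2 : 0 < (x - xhat) ^ 2 := by
      have := sub_ne_zero.mpr hne
      positivity
    nlinarith [hcross x hx, mul_pos hc h2]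
end

section
/- Let B, U be positive integers, A ∈ ℂ^{U×B}, 0 < δ < γ, ℓ > 0, and let B_ℓ = {x ∈ ℂ^B : |Re(x_b)| ≤ ℓ and |Im(x_b)| ≤ ℓ for all b}. Define E(z, x) = ‖A z‖₂² + γ‖z − x‖₂² − δ‖x‖₂². Suppose (z^{(t)}), (x^{(t)}) satisfy x^{(t)} ∈ B_ℓ, z^{(t+1)} minimizes z ↦ E(z, x^{(t)}) over ℂ^B, and x^{(t+1)} minimizes x ↦ E(z^{(t+1)}, x) over B_ℓ for all t ≥ 1. If (z*, x*) is a limit point of the sequence ((z^{(t)}, x^{(t)})) (i.e., the limit of a convergent subsequence), then z* minimizes z ↦ E(z, x*) over ℂ^B and x* minimizes x ↦ E(z*, x) over B_ℓ; that is, (z*, x*) is a coordinatewise minimizer and hence a stationary point of (BCR*). -/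
open Matrix BigOperators

/-- The objective E(z, x) = ‖A z‖₂² + γ‖z − x‖₂² − δ‖x‖₂² of (BCR*). -/
noncomputable def bcrObj {B U : ℕ} (A : Matrix (Fin U) (Fin B) ℂ) (γ δ : ℝ)
    (z x : Fin B → ℂ) : ℝ :=
  (∑ u, ‖A.mulVec z u‖ ^ 2) + γ * (∑ b, ‖z b - x b‖ ^ 2) - δ * (∑ b, ‖x b‖ ^ 2)

/-- The convex envelope B_ℓ = {x ∈ ℂ^B : |Re x_b| ≤ ℓ, |Im x_b| ≤ ℓ}. -/
def boxSet (B : ℕ) (ℓ : ℝ) : Set (Fin B → ℂ) :=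
  {x | ∀ b, |(x b).re| ≤ ℓ ∧ |(x b).im| ≤ ℓ}

/-- The objective is jointly continuous in (z, x). -/
lemma bcr_cont {B U : ℕ} (A : Matrix (Fin U) (Fin B) ℂ) (γ δ : ℝ) :
    Continuous fun p : (Fin B → ℂ) × (Fin B → ℂ) => bcrObj A γ δ p.1 p.2 := by
  unfold bcrObj Matrix.mulVec dotProduct
  fun_prop

set_option maxHeartbeats 1000000 in
/-- Theorem 1: any limit point (z*, x*) of the C1PO
alternating-minimization iterates is a coordinatewise minimizer of (BCR*). -/
theorem stmt_11 (B U : ℕ) (hB : 0 < B) (hU : 0 < U)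
    (A : Matrix (Fin U) (Fin B) ℂ) (γ δ ℓ : ℝ)
    (hδ : 0 < δ) (hδγ : δ < γ) (hℓ : 0 < ℓ)
    (zseq xseq : ℕ → Fin B → ℂ)
    (hxmem : ∀ t, xseq t ∈ boxSet B ℓ)
    (hzmin : ∀ t ≥ 1, ∀ z : Fin B → ℂ,
      bcrObj A γ δ (zseq (t + 1)) (xseq t) ≤ bcrObj A γ δ z (xseq t))
    (hxmin : ∀ t ≥ 1, ∀ x ∈ boxSet B ℓ,
      bcrObj A γ δ (zseq (t + 1)) (xseq (t + 1)) ≤ bcrObj A γ δ (zseq (t + 1)) x)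
    (zstar xstar : Fin B → ℂ)
    (hlim : ∃ φ : ℕ → ℕ, StrictMono φ ∧
      Filter.Tendsto (fun k => (zseq (φ k), xseq (φ k))) Filter.atTop
        (nhds (zstar, xstar))) :
    (∀ z : Fin B → ℂ, bcrObj A γ δ zstar xstar ≤ bcrObj A γ δ z xstar) ∧
    (∀ x ∈ boxSet B ℓ, bcrObj A γ δ zstar xstar ≤ bcrObj A γ δ zstar x) := by
  obtain ⟨φ, hφ, htend⟩ := hlim
  set e : ℕ → ℝ := fun t => bcrObj A γ δ (zseq t) (xseq t) with he
  set L : ℝ := bcrObj A γ δ zstar xstar with hL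
  have hcont := bcr_cont A γ δ
  -- the energy sequence decreases from step 1 on
  have hstep : ∀ t, 1 ≤ t → e (t + 1) ≤ e t := by
    intro t ht
    calc e (t + 1) ≤ bcrObj A γ δ (zseq (t + 1)) (xseq t) :=
          hxmin t ht _ (hxmem t)
      _ ≤ e t := hzmin t ht (zseq t)
  have hanti : ∀ s t, 1 ≤ s → s ≤ t → e t ≤ e s := by
    intro s t hs hst
    induction t with
    | zero => omega
    | succ n ih =>
      rcases Nat.lt_or_ge s (n + 1) with h | h
      · exact le_trans (hstep n (by omega)) (ih (by omega))
      · have : s = n + 1 := by omega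
        simp [this]
  -- e (φ k) → L
  have heT : Filter.Tendsto (fun k => e (φ k)) Filter.atTop (nhds L) := by
    have h2 := (hcont.tendsto (zstar, xstar)).comp htend
    simpa [Function.comp_def, he, hL] using h2
  -- hence L is a lower bound for e t, t ≥ 1
  have hge : ∀ t, 1 ≤ t → L ≤ e t := by
    intro t ht
    refine le_of_tendsto heT ?_
    filter_upwards [Filter.eventually_atTop.2 ⟨t, fun k hk => hk⟩] with k hk
    exact hanti t (φ k) ht (le_trans hk (hφ.le_apply))
  have hxT : Filter.Tendsto (fun k => xseq (φ k)) Filter.atTop (nhds xstar) := by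
    have h2 := (continuous_snd.tendsto (zstar, xstar)).comp htend
    simpa [Function.comp_def] using h2
  have hzT : Filter.Tendsto (fun k => zseq (φ k)) Filter.atTop (nhds zstar) := by
    have h2 := (continuous_fst.tendsto (zstar, xstar)).comp htend
    simpa [Function.comp_def] using h2
  constructor
  · -- z-part
    intro z
    have hT : Filter.Tendsto (fun k => bcrObj A γ δ z (xseq (φ k))) Filter.atTop
        (nhds (bcrObj A γ δ z xstar)) := by
      have : Filter.Tendsto (fun k => ((z : Fin B → ℂ), xseq (φ k))) Filter.atTop
          (nhds (z, xstar)) := Filter.Tendsto.prodMk_nhds tendsto_const_nhds hxT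
      have h2 := (hcont.tendsto (z, xstar)).comp this
      simpa [Function.comp_def] using h2
    refine ge_of_tendsto hT ?_
    filter_upwards [Filter.eventually_atTop.2 ⟨1, fun k hk => hk⟩] with k hk
    have hφk : 1 ≤ φ k := le_trans hk (hφ.le_apply)
    calc L ≤ e (φ k + 1) := hge _ (by omega)
      _ ≤ bcrObj A γ δ (zseq (φ k + 1)) (xseq (φ k)) := hxmin _ hφk _ (hxmem _)
      _ ≤ bcrObj A γ δ z (xseq (φ k)) := hzmin _ hφk z
  · -- x-part
    intro x hx
    have hT : Filter.Tendsto (fun k => bcrObj A γ δ (zseq (φ k)) x) Filter.atTop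
        (nhds (bcrObj A γ δ zstar x)) := by
      have : Filter.Tendsto (fun k => (zseq (φ k), x)) Filter.atTop
          (nhds (zstar, x)) := Filter.Tendsto.prodMk_nhds hzT tendsto_const_nhds
      have h2 := (hcont.tendsto (zstar, x)).comp this
      simpa [Function.comp_def] using h2
    refine ge_of_tendsto hT ?_
    filter_upwards [Filter.eventually_atTop.2 ⟨2, fun k hk => hk⟩] with k hk
    have hφk : 2 ≤ φ k := le_trans hk (hφ.le_apply)
    have ht1 : 1 ≤ φ k - 1 := by omega
    have ht2 : φ k - 1 + 1 = φ k := by omega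
    calc L ≤ e (φ k) := hge _ (by omega)
      _ = bcrObj A γ δ (zseq (φ k - 1 + 1)) (xseq (φ k - 1 + 1)) := by rw [ht2]
      _ ≤ bcrObj A γ δ (zseq (φ k - 1 + 1)) x := hxmin _ ht1 x hx
      _ = bcrObj A γ δ (zseq (φ k)) x := by rw [ht2]
end

section
/- Let B, U be positive integers, A ∈ ℂ^{U×B}, δ > 0, ℓ > 0, and let B_ℓ = {x ∈ ℂ^B : |Re(x_b)| ≤ ℓ and |Im(x_b)| ≤ ℓ for all b}. Define f(x) = (1/2)‖A x‖₂², g(x) = −(δ/2)‖x‖₂², and E(x) = f(x) + g(x). Let τ > 0 satisfy τ·‖Aᴴ A‖₂,₂ < 1 and τδ < 1. Suppose y ∈ B_ℓ and x' minimizes x ↦ g(x) + Re⟨Aᴴ A y, x − y⟩ + (1/(2τ))‖x − y‖₂² over x ∈ B_ℓ. Then E(x') ≤ E(y). In particular, the sequence of objective values E(x^{(t)}) produced by the C2PO iteration x^{(t+1)} = argmin over x ∈ B_ℓ of g(x) + Re⟨Aᴴ A x^{(t)}, x − x^{(t)}⟩ + (1/(2τ))‖x − x^{(t)}‖₂²,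 started from x^{(1)} ∈ B_ℓ, is monotonically nonincreasing. -/
open Matrix BigOperators

/-- The C2PO objective E(x) = (1/2)‖A x‖₂² − (δ/2)‖x‖₂². -/
noncomputable def c2poObj {B U : ℕ} (A : Matrix (Fin U) (Fin B) ℂ) (δ : ℝ)
    (x : Fin B → ℂ) : ℝ :=
  (1 / 2) * (∑ u, ‖A.mulVec x u‖ ^ 2) - (δ / 2) * (∑ b, ‖x b‖ ^ 2)

/-- The proximal surrogate minimized at each C2PO iteration, based at y:
g(x) + Re⟨Aᴴ A y, x − y⟩ + (1/(2τ))‖x − y‖₂², with g(x) = −(δ/2)‖x‖₂². -/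
noncomputable def c2poSurrogate {B U : ℕ} (A : Matrix (Fin U) (Fin B) ℂ) (δ τ : ℝ)
    (y x : Fin B → ℂ) : ℝ :=
  -(δ / 2) * (∑ b, ‖x b‖ ^ 2) + (star ((Aᴴ * A).mulVec y) ⬝ᵥ (x - y)).re
    + (1 / (2 * τ)) * (∑ b, ‖x b - y b‖ ^ 2)

private lemma conj_mul_re (c : ℂ) : ((starRingEnd ℂ) c * c).re = ‖c‖^2 := by
  rw [Complex.conj_mul']; norm_cast

private lemma dot_swap {B U : ℕ} (A : Matrix (Fin U) (Fin B) ℂ) (y z : Fin B → ℂ) :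
    star (A.mulVec y) ⬝ᵥ A.mulVec z = star ((Aᴴ * A).mulVec y) ⬝ᵥ z := by
  rw [Matrix.star_mulVec, Matrix.star_mulVec, Matrix.dotProduct_mulVec,
    Matrix.vecMul_vecMul, conjTranspose_mul, conjTranspose_conjTranspose]

private lemma quad_bound {B : ℕ} (M : Matrix (Fin B) (Fin B) ℂ) (z : Fin B → ℂ) :
    ((star (M.mulVec z)) ⬝ᵥ z).re ≤ ‖Matrix.toEuclideanCLM (𝕜 := ℂ) M‖ * ∑ b, ‖z b‖^2 := by
  set Z : EuclideanSpace ℂ (Fin B) := (WithLp.equiv _ _).symm z with hZ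
  have h1 : (star (M.mulVec z)) ⬝ᵥ z = inner ℂ (Matrix.toEuclideanCLM (𝕜 := ℂ) M Z) Z := by
    rw [hZ, WithLp.equiv_symm_apply, Matrix.toEuclideanCLM_toLp]
    simp only [PiLp.inner_apply, dotProduct, Pi.star_apply, RCLike.star_def]
    exact Finset.sum_congr rfl (fun x _ => by rw [RCLike.inner_apply'])
  have hn : ‖Z‖^2 = ∑ b, ‖z b‖^2 := by
    rw [EuclideanSpace.norm_eq, Real.sq_sqrt (by positivity)]
    rfl
  rw [h1, ← hn]
  calc (inner ℂ (Matrix.toEuclideanCLM (𝕜 := ℂ) M Z) Z : ℂ).re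
      ≤ ‖(inner ℂ (Matrix.toEuclideanCLM (𝕜 := ℂ) M Z) Z : ℂ)‖ := Complex.re_le_norm _
    _ ≤ ‖Matrix.toEuclideanCLM (𝕜 := ℂ) M Z‖ * ‖Z‖ := norm_inner_le_norm _ _
    _ ≤ (‖Matrix.toEuclideanCLM (𝕜 := ℂ) M‖ * ‖Z‖) * ‖Z‖ :=
        mul_le_mul_of_nonneg_right ((Matrix.toEuclideanCLM (𝕜 := ℂ) M).le_opNorm Z) (norm_nonneg _)
    _ = ‖Matrix.toEuclideanCLM (𝕜 := ℂ) M‖ * ‖Z‖^2 := by ring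

/-- Quadratic expansion of f along a step. -/
private lemma quad_expand {B U : ℕ} (A : Matrix (Fin U) (Fin B) ℂ) (y z : Fin B → ℂ) :
    ∑ u, ‖A.mulVec (y + z) u‖^2
      = (∑ u, ‖A.mulVec y u‖^2) + 2 * (star ((Aᴴ * A).mulVec y) ⬝ᵥ z).re
        + ∑ u, ‖A.mulVec z u‖^2 := by
  have hsum : ∑ u, ((starRingEnd ℂ) (A.mulVec y u) * (A.mulVec z u)).re
      = (star ((Aᴴ * A).mulVec y) ⬝ᵥ z).re := by
    rw [← dot_swap A y z]
    simp [dotProduct, Complex.re_sum]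
  calc ∑ u, ‖A.mulVec (y + z) u‖^2
      = ∑ u, (‖A.mulVec y u‖^2 + 2*((starRingEnd ℂ) (A.mulVec y u) * (A.mulVec z u)).re
          + ‖A.mulVec z u‖^2) := by
        refine Finset.sum_congr rfl (fun u _ => ?_)
        rw [Matrix.mulVec_add, Pi.add_apply]
        have := norm_add_sq (𝕜 := ℂ) (A.mulVec y u) (A.mulVec z u)
        simp [RCLike.inner_apply'] at this ⊢
        linear_combination this
    _ = (∑ u, ‖A.mulVec y u‖^2) + 2 * (star ((Aᴴ * A).mulVec y) ⬝ᵥ z).re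
        + ∑ u, ‖A.mulVec z u‖^2 := by
        rw [Finset.sum_add_distrib, Finset.sum_add_distrib, ← Finset.mul_sum, hsum]

private lemma sum_norm_mulVec_eq {B U : ℕ} (A : Matrix (Fin U) (Fin B) ℂ) (z : Fin B → ℂ) :
    ∑ u, ‖A.mulVec z u‖^2 = ((star ((Aᴴ * A).mulVec z)) ⬝ᵥ z).re := by
  rw [← dot_swap A z z]
  simp only [dotProduct, Pi.star_apply, RCLike.star_def, Complex.re_sum]
  exact Finset.sum_congr rfl (fun u _ => (conj_mul_re _).symm)

private lemma step_decrease {B U : ℕ} (A : Matrix (Fin U) (Fin B) ℂ) (δ ℓ τ : ℝ)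
    (hτ : 0 < τ) (hτA : τ * ‖Matrix.toEuclideanCLM (𝕜 := ℂ) (Aᴴ * A)‖ < 1)
    (y : Fin B → ℂ) (hy : y ∈ boxSet B ℓ) (x' : Fin B → ℂ)
    (hmin : ∀ x ∈ boxSet B ℓ, c2poSurrogate A δ τ y x' ≤ c2poSurrogate A δ τ y x) :
    c2poObj A δ x' ≤ c2poObj A δ y := by
  set z : Fin B → ℂ := x' - y with hz
  have hx' : x' = y + z := by simp [hz]
  have hstep : ∑ u, ‖A.mulVec z u‖^2 ≤ (1/τ) * ∑ b, ‖z b‖^2 := by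
    rw [sum_norm_mulVec_eq]
    refine le_trans (quad_bound (Aᴴ * A) z) ?_
    have h1 : ‖Matrix.toEuclideanCLM (𝕜 := ℂ) (Aᴴ * A)‖ ≤ 1/τ := by
      rw [le_div_iff₀ hτ]
      nlinarith [hτA]
    have h2 : (0:ℝ) ≤ ∑ b, ‖z b‖^2 := by positivity
    exact mul_le_mul_of_nonneg_right h1 h2
  have hEx' : c2poObj A δ x' ≤ (1/2) * (∑ u, ‖A.mulVec y u‖^2) + c2poSurrogate A δ τ y x' := by
    unfold c2poObj c2poSurrogate
    rw [hx', quad_expand A y z]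
    have hzb : ∀ b, x' b - y b = z b := fun b => by simp [hz]
    have : ∑ b, ‖x' b - y b‖^2 = ∑ b, ‖z b‖^2 :=
      Finset.sum_congr rfl (fun b _ => by rw [hzb b])
    rw [← hx', this]
    have : (1/2) * (∑ u, ‖A.mulVec z u‖^2) ≤ (1/(2*τ)) * ∑ b, ‖z b‖^2 := by
      have := hstep
      have h2 : (1:ℝ)/(2*τ) = (1/2) * (1/τ) := by field_simp
      rw [h2]
      nlinarith
    nlinarith [this]
  have hsy : c2poSurrogate A δ τ y y = -(δ / 2) * (∑ b, ‖y b‖ ^ 2) := by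
    unfold c2poSurrogate
    simp
  calc c2poObj A δ x' ≤ (1/2) * (∑ u, ‖A.mulVec y u‖^2) + c2poSurrogate A δ τ y x' := hEx'
    _ ≤ (1/2) * (∑ u, ‖A.mulVec y u‖^2) + c2poSurrogate A δ τ y y := by
        linarith [hmin y hy]
    _ = c2poObj A δ y := by rw [hsy]; unfold c2poObj; ring

/-- Theorem 2, monotone decrease: one surrogate-minimization
step of C2PO does not increase the objective E; in particular the sequence of
objective values along the C2PO iteration is monotonically nonincreasing. -/
theorem stmt_13 (B U : ℕ) (hB : 0 < B) (hU : 0 < U)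
    (A : Matrix (Fin U) (Fin B) ℂ) (δ ℓ τ : ℝ)
    (hδ : 0 < δ) (hℓ : 0 < ℓ) (hτ : 0 < τ)
    (hτA : τ * ‖Matrix.toEuclideanCLM (𝕜 := ℂ) (Aᴴ * A)‖ < 1) (hτδ : τ * δ < 1) :
    (∀ y ∈ boxSet B ℓ, ∀ x' ∈ boxSet B ℓ,
      (∀ x ∈ boxSet B ℓ, c2poSurrogate A δ τ y x' ≤ c2poSurrogate A δ τ y x) →
      c2poObj A δ x' ≤ c2poObj A δ y) ∧
    (∀ xseq : ℕ → Fin B → ℂ, xseq 1 ∈ boxSet B ℓ →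
      (∀ t ≥ 1, xseq (t + 1) ∈ boxSet B ℓ ∧
        ∀ x ∈ boxSet B ℓ,
          c2poSurrogate A δ τ (xseq t) (xseq (t + 1))
            ≤ c2poSurrogate A δ τ (xseq t) x) →
      ∀ t ≥ 1, c2poObj A δ (xseq (t + 1)) ≤ c2poObj A δ (xseq t)) := by
  constructor
  · intro y hy x' _ hmin
    exact step_decrease A δ ℓ τ hτ hτA y hy x' hmin
  · intro xseq h1 hstep t ht
    have hbox : ∀ t ≥ 1, xseq t ∈ boxSet B ℓ := by
      intro t ht
      induction t with
      | zero => omega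
      | succ n ih =>
        rcases Nat.lt_or_ge 1 (n+1) with h | h
        · exact (hstep n (by omega)).1
        · have : n + 1 = 1 := by omega
          rw [this]; exact h1
    exact step_decrease A δ ℓ τ hτ hτA (xseq t) (hbox t ht) (xseq (t+1)) (hstep t ht).2
end
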